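/- Let α ∈ (0,1), σ > 0, and -1 < β ≤ 0. Define p(s,x) = exp(-σ s^{-α/(2-α)} |x|^{2/(2-α)}) for s > 0, x ∈ R. Then there exists a constant C = C(σ, α, β) such that for all s > 0, sup_{ξ ∈ R} ∫_R |x|^β p(s, x - ξ) dx ≤ C s^{αβ/2 + α/2}. -/

import Mathlib

open MeasureTheory Real

lemma my_integrable_comp_abs {f : ℝ → ℝ} (hf : IntegrableOn f (Set.Ioi (0:ℝ)))
    : Integrable (fun x => f |x|) := by
  have hf' : IntegrableOn (fun x => f |x|) (Set.Ioi (0:ℝ)) := by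
    refine hf.congr_fun (fun x hx => ?_) measurableSet_Ioi
    rw [abs_of_pos (Set.mem_Ioi.mp hx)]
  have int_Iic : IntegrableOn (fun x ↦ f |x|) (Set.Iic 0) := by
    rw [← Measure.map_neg_eq_self (volume : Measure ℝ)]
    have m : MeasurableEmbedding fun x : ℝ => -x := (Homeomorph.neg ℝ).measurableEmbedding
    rw [m.integrableOn_map_iff]
    simp_rw [Function.comp_def, abs_neg, Set.neg_preimage, Set.neg_Iic, neg_zero]
    exact Iff.mpr integrableOn_Ici_iff_integrableOn_Ioi hf'
  have : IntegrableOn (fun x => f |x|) (Set.Iic 0 ∪ Set.Ioi 0) :=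
    integrableOn_union.mpr ⟨int_Iic, hf'⟩
  rwa [Set.Iic_union_Ioi, integrableOn_univ] at this

theorem integral_abs_rpow_mul_p_le (α σ β : ℝ) (hα : 0 < α) (hα1 : α < 1)
    (hσ : 0 < σ) (hβ1 : -1 < β) (hβ0 : β ≤ 0) :
    ∃ C : ℝ, 0 < C ∧ ∀ s : ℝ, 0 < s → ∀ ξ : ℝ,
      (∫ x : ℝ, |x| ^ β *
          Real.exp (-σ * s ^ (-(α / (2 - α))) * |x - ξ| ^ (2 / (2 - α))))
        ≤ C * s ^ (α * β / 2 + α / 2) := by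
  have h2α : 0 < 2 - α := by linarith
  set q : ℝ := 2 / (2 - α) with hq_def
  have hq1 : 1 < q := by
    rw [hq_def, lt_div_iff₀ h2α]; linarith
  have hq0 : 0 < q := by linarith
  have hiq : 1 / q = (2 - α) / 2 := by rw [hq_def, one_div_div]
  have hβ1' : 0 < β + 1 := by linarith
  set C : ℝ := 2 / (β + 1) + 2 * σ ^ (-(1 / q)) * Real.Gamma (1 / q + 1) with hC_def
  have hΓ : 0 < Real.Gamma (1 / q + 1) :=
    Real.Gamma_pos_of_pos (by positivity)
  have hC : 0 < C := by
    have h1 : 0 < 2 / (β + 1) := by positivity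
    have h2 : (0:ℝ) < σ ^ (-(1 / q)) := Real.rpow_pos_of_pos hσ _
    positivity
  refine ⟨C, hC, fun s hs ξ => ?_⟩
  set lam : ℝ := σ * s ^ (-(α / (2 - α))) with hlam_def
  have hlam : 0 < lam := by
    have := Real.rpow_pos_of_pos hs (-(α / (2 - α)))
    positivity
  set r : ℝ := s ^ (α / 2) with hr_def
  have hr : 0 < r := Real.rpow_pos_of_pos hs _
  set f : ℝ → ℝ := fun t => Set.indicator (Set.Icc 0 r) (fun t => t ^ β) t with hf_def
  set G : ℝ → ℝ := fun x => f |x| + r ^ β * Real.exp (-lam * |x - ξ| ^ q) with hG_def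
  -- integrability of the pieces
  have hf_int : Integrable f := by
    rw [hf_def, integrable_indicator_iff measurableSet_Icc]
    rw [← intervalIntegrable_iff_integrableOn_Icc_of_le hr.le]
    exact intervalIntegral.intervalIntegrable_rpow' hβ1
  have hfabs_int : Integrable (fun x => f |x|) := my_integrable_comp_abs hf_int.integrableOn
  have hexp0_int : Integrable (fun x : ℝ => Real.exp (-lam * |x| ^ q)) := by
    refine my_integrable_comp_abs (f := fun t => Real.exp (-lam * t ^ q)) ?_
    refine (integrableOn_rpow_mul_exp_neg_mul_rpow (s := 0) neg_one_lt_zero hq0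
      hlam).congr_fun (fun x hx => ?_) measurableSet_Ioi
    dsimp only; rw [Real.rpow_zero, one_mul]
  have hexp_int : Integrable (fun x : ℝ => Real.exp (-lam * |x - ξ| ^ q)) :=
    hexp0_int.comp_sub_right ξ
  have hG_int : Integrable G := hfabs_int.add (hexp_int.const_mul _)
  -- pointwise bound
  have h_le : ∀ x : ℝ, |x| ^ β * Real.exp (-σ * s ^ (-(α / (2 - α))) * |x - ξ| ^ (2 / (2 - α)))
      ≤ G x := by
    intro x
    have harg : -σ * s ^ (-(α / (2 - α))) * |x - ξ| ^ (2 / (2 - α)) = -lam * |x - ξ| ^ q := by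
      rw [hlam_def, hq_def]; ring
    rw [harg]
    have hexp_pos : 0 < Real.exp (-lam * |x - ξ| ^ q) := Real.exp_pos _
    have hexp_le1 : Real.exp (-lam * |x - ξ| ^ q) ≤ 1 := by
      rw [Real.exp_le_one_iff]
      have : (0:ℝ) ≤ |x - ξ| ^ q := Real.rpow_nonneg (abs_nonneg _) _
      nlinarith
    rcases le_or_gt |x| r with h | h
    · have hf_eq : f |x| = |x| ^ β :=
        Set.indicator_of_mem (Set.mem_Icc.mpr ⟨abs_nonneg x, h⟩) _
      have h1 : |x| ^ β * Real.exp (-lam * |x - ξ| ^ q) ≤ |x| ^ β := by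
        nlinarith [Real.rpow_nonneg (abs_nonneg x) β]
      have h2 : 0 ≤ r ^ β * Real.exp (-lam * |x - ξ| ^ q) := by positivity
      rw [hG_def]; dsimp only; rw [hf_eq]; linarith
    · have hf_eq : f |x| = 0 := Set.indicator_of_notMem (fun hmem => absurd hmem.2 h.not_ge) _
      have hx_le : |x| ^ β ≤ r ^ β := Real.rpow_le_rpow_of_nonpos hr h.le hβ0
      rw [hG_def]; dsimp only; rw [hf_eq, zero_add]
      exact mul_le_mul_of_nonneg_right hx_le hexp_pos.le
  have h_nonneg : ∀ x : ℝ, (0:ℝ) ≤ |x| ^ β *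
      Real.exp (-σ * s ^ (-(α / (2 - α))) * |x - ξ| ^ (2 / (2 - α))) := by
    intro x
    have := Real.rpow_nonneg (abs_nonneg x) β
    positivity
  have hmain : (∫ x : ℝ, |x| ^ β *
      Real.exp (-σ * s ^ (-(α / (2 - α))) * |x - ξ| ^ (2 / (2 - α)))) ≤ ∫ x, G x :=
    integral_mono_of_nonneg (Filter.Eventually.of_forall h_nonneg) hG_int
      (Filter.Eventually.of_forall h_le)
  -- compute ∫ G
  have hG_val : (∫ x, G x) =
      2 * (r ^ (β + 1) / (β + 1)) + r ^ β * (2 * (lam ^ (-(1/q)) * Real.Gamma (1/q + 1))) := by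
    rw [hG_def, integral_add hfabs_int (hexp_int.const_mul _)]
    congr 1
    · rw [integral_comp_abs (f := f), hf_def]
      rw [integral_indicator measurableSet_Icc, Measure.restrict_restrict measurableSet_Icc]
      have hset : Set.Icc (0:ℝ) r ∩ Set.Ioi 0 = Set.Ioc 0 r := by
        ext x
        simp only [Set.mem_inter_iff, Set.mem_Icc, Set.mem_Ioi, Set.mem_Ioc]
        constructor
        · rintro ⟨⟨_, h2⟩, h3⟩; exact ⟨h3, h2⟩
        · rintro ⟨h1, h2⟩; exact ⟨⟨h1.le, h2⟩, h1⟩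
      rw [hset, ← intervalIntegral.integral_of_le hr.le,
        integral_rpow (Or.inl hβ1),
        Real.zero_rpow (by linarith : β + 1 ≠ 0)]
      ring
    · rw [integral_const_mul]
      congr 1
      rw [integral_sub_right_eq_self (fun x : ℝ => Real.exp (-lam * |x| ^ q)) ξ]
      rw [integral_comp_abs (f := fun t : ℝ => Real.exp (-lam * t ^ q))]
      rw [integral_exp_neg_mul_rpow hq0 hlam]
      rw [show (-1 : ℝ) / q = -(1/q) by ring]
  -- arithmetic
  have hlam_pow : lam ^ (-(1/q)) = σ ^ (-(1/q)) * s ^ (α / 2) := by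
    rw [hlam_def, Real.mul_rpow hσ.le (Real.rpow_pos_of_pos hs _).le,
      ← Real.rpow_mul hs.le]
    have hexp_eq : -(α / (2 - α)) * -(1 / q) = α / 2 := by
      rw [hiq]; field_simp
    rw [hexp_eq]
  have hr_pow1 : r ^ (β + 1) = s ^ (α * β / 2 + α / 2) := by
    rw [hr_def, ← Real.rpow_mul hs.le]
    congr 1; ring
  have hr_pow2 : r ^ β * s ^ (α / 2) = s ^ (α * β / 2 + α / 2) := by
    rw [hr_def, ← Real.rpow_mul hs.le, ← Real.rpow_add hs]
    congr 1; ring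
  calc (∫ x : ℝ, |x| ^ β *
      Real.exp (-σ * s ^ (-(α / (2 - α))) * |x - ξ| ^ (2 / (2 - α)))) ≤ ∫ x, G x := hmain
    _ = C * s ^ (α * β / 2 + α / 2) := by
        rw [hG_val, hlam_pow, hC_def]
        rw [show r ^ β * (2 * (σ ^ (-(1/q)) * s ^ (α/2) * Real.Gamma (1/q + 1)))
            = 2 * σ ^ (-(1/q)) * Real.Gamma (1/q + 1) * (r ^ β * s ^ (α/2)) by ring]
        rw [hr_pow1, hr_pow2]
        ring
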